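/- Let j' be a client, J' a finite set of clients containing j' with |J'| ≥ 1, and suppose b^t: J' → R_{≥0} is such that b^t_{j'} is among the ⌈|J'|/2⌉ smallest values of b^t over J'. Then for any t ≥ 0, (b^t_{j'} − t)^+ ≤ (2/|J'|) · ∑_{j ∈ J'} (b^t_j − t)^+. -/
import Mathlib


open Finset

/-- If `j' ∈ J'` is among the `⌈|J'|/2⌉` smallest values of `b` over `J'`
(i.e. fewer than `⌈|J'|/2⌉` elements of `J'` have a strictly smaller `b`-value), then
`(b_{j'} − t)⁺ ≤ (2/|J'|) · ∑_{j ∈ J'} (b_j − t)⁺` for every `t ≥ 0`. -/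
theorem stmt11 {ι : Type*} (J' : Finset ι) (hJ' : J'.Nonempty)
    (j' : ι) (hj' : j' ∈ J') (b : ι → ℝ) (hb : ∀ j, 0 ≤ b j)
    (hhalf : (J'.filter fun j => b j < b j').card < (J'.card + 1) / 2)
    (t : ℝ) (ht : 0 ≤ t) :
    max (b j' - t) 0 ≤ (2 / (J'.card : ℝ)) * ∑ j ∈ J', max (b j - t) 0 := by
  classical
  set n := J'.card with hn
  have hnpos : 0 < n := card_pos.mpr hJ'
  set G := J'.filter fun j => ¬ b j < b j' with hG
  set c := G.card with hc
  -- card split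
  have hsplit : (J'.filter fun j => b j < b j').card + c = n := by
    simpa [hc, hG] using card_filter_add_card_filter_not (s := J')
      (p := fun j => b j < b j')
  have hcge : n ≤ 2 * c := by omega
  set M := max (b j' - t) 0 with hM
  have hM0 : 0 ≤ M := le_max_right _ _
  -- sum bound
  have hsum : (c : ℝ) * M ≤ ∑ j ∈ J', max (b j - t) 0 := by
    have h1 : (c : ℝ) * M ≤ ∑ j ∈ G, max (b j - t) 0 := by
      rw [mul_comm]
      have := Finset.sum_le_sum (s := G) (f := fun _ => M)
        (g := fun j => max (b j - t) 0) ?_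
      · simpa [mul_comm] using this
      · intro j hj
        rw [hG, mem_filter] at hj
        have : b j' ≤ b j := not_lt.mp hj.2
        exact max_le_max (by linarith) le_rfl
    have h2 : ∑ j ∈ G, max (b j - t) 0 ≤ ∑ j ∈ J', max (b j - t) 0 :=
      Finset.sum_le_sum_of_subset_of_nonneg (filter_subset _ _)
        (fun j _ _ => le_max_right _ _)
    linarith
  have hnR : (0:ℝ) < n := by exact_mod_cast hnpos
  rw [div_mul_eq_mul_div, le_div_iff₀ hnR]
  have : (n : ℝ) * M ≤ 2 * ((c : ℝ) * M) := by
    have : (n : ℝ) ≤ 2 * c := by exact_mod_cast hcge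
    nlinarith
  nlinarith [hsum]
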